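/- Let Q be an n × n' matrix over a commutative ring whose (i,j) entry is Σ_{φ ∈ Φ_{i|j}} Π_{v ∈ V_φ} w(v), where Φ_{i|j} is the set of directed paths from source s_i to sink t_j in a planar network G with weighting w on vertices. Then for any I ⊆ [n], J ⊆ [n'] with |I| = |J|, the minor Δ_Q(I|J) equals Σ_{φ ∈ Φ_{I|J}} Π_{v ∈ V_φ} w(v), where Φ_{I|J} is the set of collections of pairwise vertex-disjoint directed paths from the sources {s_i : i ∈ I} to the sinks {t_j : j ∈ J} (Lindström's lemma). -/

import Mathlib

/-- `p` is a directed path in the digraph with edge relation `E`,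
starting at `a` and ending at `b` (given as its list of vertices). -/
def IsDirPath {V : Type*} (E : V → V → Prop) (a b : V) (p : List V) : Prop :=
  p ≠ [] ∧ p.Chain' E ∧ p.head? = some a ∧ p.getLast? = some b

set_option linter.unusedSectionVars false
namespace LGV

variable {V : Type} [DecidableEq V] {E : V → V → Prop}

lemma chain_transGen {a b : V} {l : List V} (hc : List.Chain E a l) (hb : b ∈ l) :
    Relation.TransGen E a b := by
  induction l generalizing a with
  | nil => simp at hb
  | cons x xs ih =>
    rw [List.Chain, List.chain_cons] at hc
    rcases List.mem_cons.1 hb with rfl | hb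
    · exact Relation.TransGen.single hc.1
    · exact Relation.TransGen.head hc.1 (ih hc.2 hb)

lemma nodup_of_chain' (hacyc : ∀ v : V, ¬ Relation.TransGen E v v) :
    ∀ {l : List V}, l.Chain' E → l.Nodup := by
  intro l
  induction l with
  | nil => simp
  | cons a xs ih =>
    intro hc
    have h1 : List.Chain E a xs := hc
    refine List.nodup_cons.2 ⟨fun ha => hacyc a (chain_transGen h1 ha), ih hc.tail⟩

/-- workhorse split lemma -/
lemma split_spec (q : V → Bool) (l₁ l₂ : List V) (v : V)
    (h₁ : ∀ u ∈ l₁, q u = true) (hv : q v = false) :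
    (l₁ ++ v :: l₂).takeWhile q = l₁ ∧ (l₁ ++ v :: l₂).dropWhile q = v :: l₂ := by
  induction l₁ with
  | nil => simp [List.takeWhile_cons, List.dropWhile_cons, hv]
  | cons x xs ih =>
    have hx := h₁ x (by simp)
    obtain ⟨ht, hd⟩ := ih (fun u hu => h₁ u (by simp [hu]))
    constructor
    · simpa [List.takeWhile_cons, hx] using ht
    · simpa [List.dropWhile_cons, hx] using hd

def bef (l : List V) (v : V) : List V := l.takeWhile (fun x => x != v)
def aft (l : List V) (v : V) : List V := (l.dropWhile (fun x => x != v)).tail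

lemma not_mem_bef (l : List V) (v : V) : v ∉ bef l v := by
  intro h
  have := List.mem_takeWhile_imp h
  simp at this

lemma bef_aft_spec {l : List V} {v : V} (hv : v ∈ l) :
    l = bef l v ++ v :: aft l v := by
  have hne : l.dropWhile (fun x => x != v) ≠ [] := by
    intro h
    rw [List.dropWhile_eq_nil_iff] at h
    simpa using h v hv
  have hh := List.head_dropWhile_not (fun x => x != v) hne
  simp only [bne_eq_false_iff_eq] at hh
  have : l.dropWhile (fun x => x != v) = v :: aft l v := by
    rw [aft]
    conv_lhs => rw [← List.cons_head_tail hne, hh]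
  conv_lhs => rw [← List.takeWhile_append_dropWhile (p := fun x => x != v) (l := l)]
  rw [this]; rfl

lemma split_unique {l l₁ l₂ : List V} {v : V} (h1 : l = l₁ ++ v :: l₂) (h2 : v ∉ l₁) :
    bef l v = l₁ ∧ aft l v = l₂ := by
  have := split_spec (fun x => x != v) l₁ l₂ v
    (fun u hu => by simp; rintro rfl; exact h2 hu) (by simp)
  subst h1
  refine ⟨this.1, ?_⟩
  rw [aft, this.2]; rfl

lemma mem_bef {l : List V} {v u : V} (h : u ∈ bef l v) : u ∈ l :=
  (List.takeWhile_sublist _).mem h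

lemma mem_aft {l : List V} {v u : V} (h : u ∈ aft l v) : u ∈ l :=
  ((List.tail_sublist _).trans (List.dropWhile_sublist _)).mem h

lemma isDirPath_graft {a b c d v : V} {l₁ l₂ m₁ m₂ : List V}
    (h1 : IsDirPath E a b (l₁ ++ v :: l₂)) (h2 : IsDirPath E c d (m₁ ++ v :: m₂)) :
    IsDirPath E a d (l₁ ++ v :: m₂) := by
  obtain ⟨-, hc1, hh1, -⟩ := h1
  obtain ⟨-, hc2, -, hl2⟩ := h2
  rw [List.Chain', List.isChain_append] at hc1 hc2
  refine ⟨by simp, ?_, ?_, ?_⟩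
  · rw [List.Chain', List.isChain_append]
    exact ⟨hc1.1, hc2.2.1, by
      intro x hx y hy
      exact hc1.2.2 x hx y (by simpa using hy)⟩
  · rw [List.head?_append] at hh1 ⊢
    simpa using hh1
  · rw [List.getLast?_append] at hl2 ⊢
    rcases List.getLast?_eq_getLast (l := v :: m₂) (by simp) with h
    rw [h] at hl2 ⊢
    simpa using hl2


end LGV

namespace LGV
noncomputable section
open Classical

variable {V : Type} [DecidableEq V] {k : ℕ}

def Meets (p : Fin k → List V) (i : Fin k) : Prop :=
  ∃ j, j ≠ i ∧ ∃ v, v ∈ p i ∧ v ∈ p j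

def NDisj (p : Fin k → List V) : Prop := ∃ i, Meets p i

lemma filter_meets_nonempty {p : Fin k → List V} (h : NDisj p) :
    (Finset.univ.filter (Meets p)).Nonempty := by
  obtain ⟨i, hi⟩ := h; exact ⟨i, by simp [hi]⟩

def i0 (p : Fin k → List V) (h : NDisj p) : Fin k :=
  (Finset.univ.filter (Meets p)).min' (filter_meets_nonempty h)

lemma meets_i0 (p : Fin k → List V) (h : NDisj p) : Meets p (i0 p h) := by
  have := Finset.min'_mem (Finset.univ.filter (Meets p)) (filter_meets_nonempty h)
  simpa [i0] using this

lemma i0_le (p : Fin k → List V) (h : NDisj p) {i} (hi : Meets p i) : i0 p h ≤ i :=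
  Finset.min'_le _ _ (by simp [hi])

lemma i0_eq (p : Fin k → List V) (h : NDisj p) {i} (hm : Meets p i)
    (hmin : ∀ i', Meets p i' → i ≤ i') : i0 p h = i :=
  le_antisymm (i0_le p h hm) (hmin _ (meets_i0 p h))

def Cross (p : Fin k → List V) (i : Fin k) (v : V) : Prop := ∃ j, j ≠ i ∧ v ∈ p j

lemma drop_ne (p : Fin k → List V) (h : NDisj p) :
    (p (i0 p h)).dropWhile (fun v => !decide (Cross p (i0 p h) v)) ≠ [] := by
  intro hnil
  rw [List.dropWhile_eq_nil_iff] at hnil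
  obtain ⟨j, hj, v, hvi, hvj⟩ := meets_i0 p h
  have := hnil v hvi
  simp only [Bool.not_eq_true', decide_eq_false_iff_not] at this
  exact this ⟨j, hj, hvj⟩

def v0 (p : Fin k → List V) (h : NDisj p) : V :=
  ((p (i0 p h)).dropWhile (fun v => !decide (Cross p (i0 p h) v))).head (drop_ne p h)

lemma v0_spec (p : Fin k → List V) (h : NDisj p) :
    p (i0 p h) = bef (p (i0 p h)) (v0 p h) ++ v0 p h :: aft (p (i0 p h)) (v0 p h) ∧
    Cross p (i0 p h) (v0 p h) ∧
    (∀ u ∈ bef (p (i0 p h)) (v0 p h), ¬ Cross p (i0 p h) u) ∧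
    v0 p h ∈ p (i0 p h) := by
  set q : V → Bool := fun v => !decide (Cross p (i0 p h) v) with hq
  set l : List V := p (i0 p h) with hl
  have hd : l.dropWhile q = v0 p h :: (l.dropWhile q).tail :=
    (List.cons_head_tail (drop_ne p h)).symm
  have hcross : Cross p (i0 p h) (v0 p h) := by
    have := List.head_dropWhile_not q (drop_ne p h)
    simp only [hq, Bool.not_eq_false', decide_eq_true_eq] at this
    exact this
  have htake : ∀ u ∈ l.takeWhile q, ¬ Cross p (i0 p h) u := by
    intro u hu
    have := List.mem_takeWhile_imp hu
    simp only [hq, Bool.not_eq_true', decide_eq_false_iff_not] at this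
    exact this
  have hvnot : v0 p h ∉ l.takeWhile q := fun hm => htake _ hm hcross
  have hdec : l = l.takeWhile q ++ v0 p h :: (l.dropWhile q).tail := by
    conv_lhs => rw [← List.takeWhile_append_dropWhile (p := q) (l := l), hd]
  obtain ⟨hb, ha⟩ := split_unique hdec hvnot
  refine ⟨?_, hcross, ?_, ?_⟩
  · rw [hb, ha]; exact hdec
  · intro u hu; exact htake u (hb ▸ hu)
  · rw [hdec]; simp

lemma v0_eq (p : Fin k → List V) (h : NDisj p) {v : V} {l₁ l₂ : List V}
    (hdec : p (i0 p h) = l₁ ++ v :: l₂)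
    (hl₁ : ∀ u ∈ l₁, ¬ Cross p (i0 p h) u) (hv : Cross p (i0 p h) v) : v0 p h = v := by
  set q : V → Bool := fun v => !decide (Cross p (i0 p h) v) with hq
  have hs := split_spec q l₁ l₂ v (fun u hu => by simp [hq, hl₁ u hu]) (by simp [hq, hv])
  rw [← hdec] at hs
  have h1 : some (v0 p h) = ((p (i0 p h)).dropWhile q).head? :=
    (List.head?_eq_head (drop_ne p h)).symm
  rw [hs.2] at h1
  simpa using h1

lemma filter_j0_nonempty (p : Fin k → List V) (h : NDisj p) :
    (Finset.univ.filter (fun j => j ≠ i0 p h ∧ v0 p h ∈ p j)).Nonempty := by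
  obtain ⟨j, hj1, hj2⟩ := (v0_spec p h).2.1
  exact ⟨j, by simp [hj1, hj2]⟩

def j0 (p : Fin k → List V) (h : NDisj p) : Fin k :=
  (Finset.univ.filter (fun j => j ≠ i0 p h ∧ v0 p h ∈ p j)).min' (filter_j0_nonempty p h)

lemma j0_spec (p : Fin k → List V) (h : NDisj p) :
    j0 p h ≠ i0 p h ∧ v0 p h ∈ p (j0 p h) := by
  have := Finset.min'_mem _ (filter_j0_nonempty p h)
  simpa [j0] using this

lemma j0_le (p : Fin k → List V) (h : NDisj p) {j} (h1 : j ≠ i0 p h) (h2 : v0 p h ∈ p j) :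
    j0 p h ≤ j :=
  Finset.min'_le _ _ (by simp [h1, h2])

lemma j0_eq (p : Fin k → List V) (h : NDisj p) {j} (h1 : j ≠ i0 p h) (h2 : v0 p h ∈ p j)
    (hmin : ∀ j', j' ≠ i0 p h → v0 p h ∈ p j' → j ≤ j') : j0 p h = j :=
  le_antisymm (j0_le p h h1 h2) (hmin _ (j0_spec p h).1 (j0_spec p h).2)

lemma i0_lt_j0 (p : Fin k → List V) (h : NDisj p) : i0 p h < j0 p h := by
  have hm : Meets p (j0 p h) :=
    ⟨i0 p h, Ne.symm (j0_spec p h).1, v0 p h, (j0_spec p h).2, (v0_spec p h).2.2.2⟩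
  exact lt_of_le_of_ne (i0_le p h hm) (Ne.symm (j0_spec p h).1)

def newp (p : Fin k → List V) (h : NDisj p) : Fin k → List V :=
  Function.update (Function.update p (i0 p h)
      (bef (p (i0 p h)) (v0 p h) ++ v0 p h :: aft (p (j0 p h)) (v0 p h)))
    (j0 p h)
    (bef (p (j0 p h)) (v0 p h) ++ v0 p h :: aft (p (i0 p h)) (v0 p h))

lemma newp_apply_i0 (p : Fin k → List V) (h : NDisj p) :
    newp p h (i0 p h) = bef (p (i0 p h)) (v0 p h) ++ v0 p h :: aft (p (j0 p h)) (v0 p h) := by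
  rw [newp, Function.update_of_ne (Ne.symm (j0_spec p h).1), Function.update_self]

lemma newp_apply_j0 (p : Fin k → List V) (h : NDisj p) :
    newp p h (j0 p h) = bef (p (j0 p h)) (v0 p h) ++ v0 p h :: aft (p (i0 p h)) (v0 p h) := by
  rw [newp, Function.update_self]

lemma newp_apply_other (p : Fin k → List V) (h : NDisj p) {i : Fin k}
    (h1 : i ≠ i0 p h) (h2 : i ≠ j0 p h) : newp p h i = p i := by
  rw [newp, Function.update_of_ne h2, Function.update_of_ne h1]

lemma mem_newp (p : Fin k → List V) (h : NDisj p) {i : Fin k} {v : V}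
    (hv : v ∈ newp p h i) : v ∈ p i ∨ v ∈ p (i0 p h) ∨ v ∈ p (j0 p h) := by
  by_cases h2 : i = j0 p h
  · subst h2
    rw [newp_apply_j0] at hv
    rcases List.mem_append.1 hv with h3 | h3
    · exact Or.inl (mem_bef h3)
    · rcases List.mem_cons.1 h3 with rfl | h3
      · exact Or.inr (Or.inl (v0_spec p h).2.2.2)
      · exact Or.inr (Or.inl (mem_aft h3))
  by_cases h1 : i = i0 p h
  · subst h1
    rw [newp_apply_i0] at hv
    rcases List.mem_append.1 hv with h3 | h3
    · exact Or.inl (mem_bef h3)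
    · rcases List.mem_cons.1 h3 with rfl | h3
      · exact Or.inr (Or.inr (j0_spec p h).2)
      · exact Or.inr (Or.inr (mem_aft h3))
  · rw [newp_apply_other p h h1 h2] at hv
    exact Or.inl hv

lemma v0_mem_newp_i0 (p : Fin k → List V) (h : NDisj p) : v0 p h ∈ newp p h (i0 p h) := by
  rw [newp_apply_i0]; simp

lemma v0_mem_newp_j0 (p : Fin k → List V) (h : NDisj p) : v0 p h ∈ newp p h (j0 p h) := by
  rw [newp_apply_j0]; simp

lemma ndisj_newp (p : Fin k → List V) (h : NDisj p) : NDisj (newp p h) :=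
  ⟨i0 p h, j0 p h, (j0_spec p h).1, v0 p h, v0_mem_newp_i0 p h, v0_mem_newp_j0 p h⟩

lemma i0_newp (p : Fin k → List V) (h : NDisj p) (h' : NDisj (newp p h)) :
    i0 (newp p h) h' = i0 p h := by
  apply i0_eq
  · exact ⟨j0 p h, (j0_spec p h).1, v0 p h, v0_mem_newp_i0 p h, v0_mem_newp_j0 p h⟩
  · intro i hi
    by_contra hlt
    push_neg at hlt
    obtain ⟨j, hj, v, hvi, hvj⟩ := hi
    have hii0 : i ≠ i0 p h := ne_of_lt hlt
    have hij0 : i ≠ j0 p h := ne_of_lt (hlt.trans (i0_lt_j0 p h))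
    rw [newp_apply_other p h hii0 hij0] at hvi
    have hmi : Meets p i := by
      rcases mem_newp p h hvj with hj' | hj' | hj'
      · exact ⟨j, hj, v, hvi, hj'⟩
      · exact ⟨i0 p h, Ne.symm hii0, v, hvi, hj'⟩
      · exact ⟨j0 p h, Ne.symm hij0, v, hvi, hj'⟩
    exact absurd (i0_le p h hmi) (not_le.2 hlt)

lemma v0_newp (p : Fin k → List V) (h : NDisj p) (h' : NDisj (newp p h))
    (hnd : (p (i0 p h)).Nodup) : v0 (newp p h) h' = v0 p h := by
  have hi0 := i0_newp p h h'
  apply v0_eq (newp p h) h'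
    (l₁ := bef (p (i0 p h)) (v0 p h)) (l₂ := aft (p (j0 p h)) (v0 p h)) (v := v0 p h)
  · rw [hi0, newp_apply_i0]
  · rw [hi0]
    intro u hu hcr
    obtain ⟨j, hj, huj⟩ := hcr
    have hucr : ¬ Cross p (i0 p h) u := (v0_spec p h).2.2.1 u hu
    have huv0 : u ≠ v0 p h := by
      rintro rfl; exact hucr (v0_spec p h).2.1
    by_cases hjj : j = j0 p h
    · subst hjj
      rw [newp_apply_j0] at huj
      rcases List.mem_append.1 huj with h3 | h3
      · exact hucr ⟨j0 p h, (j0_spec p h).1, mem_bef h3⟩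
      · rcases List.mem_cons.1 h3 with rfl | h3
        · exact huv0 rfl
        · have hnd' := hnd
          rw [(v0_spec p h).1, List.nodup_append] at hnd'
          exact hnd'.2.2 u hu u (List.mem_cons.2 (Or.inr h3)) rfl
    · rw [newp_apply_other p h hj hjj] at huj
      exact hucr ⟨j, hj, huj⟩
  · rw [hi0]
    exact ⟨j0 p h, (j0_spec p h).1, v0_mem_newp_j0 p h⟩

lemma j0_newp (p : Fin k → List V) (h : NDisj p) (h' : NDisj (newp p h))
    (hnd : (p (i0 p h)).Nodup) : j0 (newp p h) h' = j0 p h := by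
  have hi0 := i0_newp p h h'
  have hv0 := v0_newp p h h' hnd
  apply j0_eq
  · rw [hi0]; exact (j0_spec p h).1
  · rw [hv0]; exact v0_mem_newp_j0 p h
  · intro j hj hvj
    rw [hi0] at hj
    rw [hv0] at hvj
    by_cases hjj : j = j0 p h
    · exact hjj.ge
    · rw [newp_apply_other p h hj hjj] at hvj
      exact j0_le p h hj hvj

lemma newp_newp (p : Fin k → List V) (h : NDisj p) (h' : NDisj (newp p h))
    (hnd : (p (i0 p h)).Nodup) : newp (newp p h) h' = p := by
  have hi0 := i0_newp p h h'
  have hv0 := v0_newp p h h' hnd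
  have hj0 := j0_newp p h h' hnd
  have e1 := split_unique (newp_apply_i0 p h) (not_mem_bef _ _)
  have e2 := split_unique (newp_apply_j0 p h) (not_mem_bef _ _)
  funext i
  by_cases h2 : i = j0 p h
  · subst h2
    have hx := newp_apply_j0 (newp p h) h'
    rw [hi0, hv0, hj0] at hx
    rw [hx, e2.1, e1.2]
    exact (bef_aft_spec (j0_spec p h).2).symm
  by_cases h1 : i = i0 p h
  · subst h1
    have hx := newp_apply_i0 (newp p h) h'
    rw [hi0, hv0, hj0] at hx
    rw [hx, e1.1, e2.2]
    exact ((v0_spec p h).1).symm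
  · have hx := newp_apply_other (newp p h) h' (i := i)
      (by rw [hi0]; exact h1) (by rw [hj0]; exact h2)
    rw [hx, newp_apply_other p h h1 h2]

lemma newp_isDirPath {E : V → V → Prop} {a b c d : V} (p : Fin k → List V) (h : NDisj p)
    (hi : IsDirPath E a b (p (i0 p h))) (hj : IsDirPath E c d (p (j0 p h))) :
    IsDirPath E a d (newp p h (i0 p h)) ∧ IsDirPath E c b (newp p h (j0 p h)) := by
  have d1 := (v0_spec p h).1
  have d2 := bef_aft_spec (j0_spec p h).2
  rw [newp_apply_i0, newp_apply_j0]
  rw [d1] at hi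
  rw [d2] at hj
  exact ⟨isDirPath_graft hi hj, isDirPath_graft hj hi⟩

lemma prod_swap_pair {R : Type} [CommMonoid R] {f g : Fin k → R} {i j : Fin k} (hij : i ≠ j)
    (hfg : ∀ x, x ≠ i → x ≠ j → g x = f x) (hpair : g i * g j = f i * f j) :
    ∏ x, g x = ∏ x, f x := by
  rw [← Finset.mul_prod_erase _ g (Finset.mem_univ i),
      ← Finset.mul_prod_erase _ g (Finset.mem_erase.2 ⟨Ne.symm hij, Finset.mem_univ j⟩),
      ← Finset.mul_prod_erase _ f (Finset.mem_univ i),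
      ← Finset.mul_prod_erase _ f (Finset.mem_erase.2 ⟨Ne.symm hij, Finset.mem_univ j⟩),
      ← mul_assoc, ← mul_assoc, hpair]
  congr 1
  apply Finset.prod_congr rfl
  intro x hx
  simp only [Finset.mem_erase] at hx
  exact hfg x hx.2.1 hx.1

lemma newp_prod {R : Type} [CommRing R] (w : V → R) (p : Fin k → List V) (h : NDisj p) :
    ∏ i, ((newp p h i).map w).prod = ∏ i, ((p i).map w).prod := by
  apply prod_swap_pair (i := i0 p h) (j := j0 p h) (ne_of_lt (i0_lt_j0 p h))
  · intro x hx1 hx2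
    rw [newp_apply_other p h hx1 hx2]
  · rw [newp_apply_i0, newp_apply_j0]
    conv_rhs => rw [(v0_spec p h).1, bef_aft_spec (j0_spec p h).2]
    simp only [List.map_append, List.prod_append, List.map_cons, List.prod_cons]
    ring

lemma ndisj_of_not (p : Fin k → List V)
    (hnd : ¬ ∀ i j, i ≠ j → ∀ v, v ∈ p i → v ∉ p j) : NDisj p := by
  push_neg at hnd
  obtain ⟨i, j, hij, v, hvi, hvj⟩ := hnd
  exact ⟨i, j, Ne.symm hij, v, hvi, hvj⟩

lemma not_disj_of_ndisj (p : Fin k → List V) (h : NDisj p) :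
    ¬ ∀ i j, i ≠ j → ∀ v, v ∈ p i → v ∉ p j := by
  obtain ⟨i, j, hij, v, hvi, hvj⟩ := h
  intro hd
  exact hd i j (Ne.symm hij) v hvi hvj

end
end LGV

/-- Lindström's lemma. -/
theorem stmt_9 {V : Type} [Fintype V] [DecidableEq V] {R : Type} [CommRing R]
    (E : V → V → Prop)
    -- the digraph is acyclic
    (hacyc : ∀ v : V, ¬ Relation.TransGen E v v)
    {n n' : ℕ} (s : Fin n → V) (t : Fin n' → V) (w : V → R)
    -- planarity (in the form used: any family of pairwise vertex-disjoint directed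
    -- paths from the sources indexed by `I` to the sinks indexed by `J` must connect
    -- them in the order-preserving way)
    (hplanar : ∀ (k : ℕ) (α : Fin k → Fin n) (β : Fin k → Fin n'),
      StrictMono α → StrictMono β →
      ∀ (σ : Equiv.Perm (Fin k)) (p : Fin k → List V),
        (∀ i, IsDirPath E (s (α i)) (t (β (σ i))) (p i)) →
        (∀ i j, i ≠ j → ∀ v, v ∈ p i → v ∉ p j) → σ = 1)
    (Q : Matrix (Fin n) (Fin n') R)
    (hQ : ∀ i j, Q i j = ∑ᶠ p ∈ {p : List V | IsDirPath E (s i) (t j) p}, (p.map w).prod)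
    (k : ℕ) (α : Fin k → Fin n) (β : Fin k → Fin n')
    (hα : StrictMono α) (hβ : StrictMono β) :
    (Q.submatrix α β).det =
      ∑ᶠ p ∈ {p : Fin k → List V |
          (∀ i, IsDirPath E (s (α i)) (t (β i)) (p i)) ∧
          (∀ i j, i ≠ j → ∀ v, v ∈ p i → v ∉ p j)},
        ∏ i, ((p i).map w).prod := by
  classical
  have hnodup : ∀ {a b : V} {l : List V}, IsDirPath E a b l → l.Nodup :=
    fun hl => LGV.nodup_of_chain' hacyc hl.2.1
  have hfin : ∀ a b : V, {l : List V | IsDirPath E a b l}.Finite := by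
    intro a b
    apply (List.finite_length_le V (Fintype.card V)).subset
    intro l hl
    exact (hnodup hl).length_le_card
  set F : V → V → Finset (List V) := fun a b => (hfin a b).toFinset with hF
  have hFmem : ∀ {a b : V} {l : List V}, l ∈ F a b ↔ IsDirPath E a b l := by
    intro a b l
    simp [hF, Set.Finite.mem_toFinset]
  have hQ' : ∀ (i : Fin n) (j : Fin n'), Q i j = ∑ l ∈ F (s i) (t j), (l.map w).prod := by
    intro i j
    rw [hQ i j, ← (hfin (s i) (t j)).coe_toFinset, finsum_mem_coe_finset]
  set Disj : (Fin k → List V) → Prop :=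
    fun p => ∀ i j, i ≠ j → ∀ v, v ∈ p i → v ∉ p j with hDisj
  set S : Finset ((_ : Equiv.Perm (Fin k)) × (Fin k → List V)) :=
    Finset.univ.sigma fun σ : Equiv.Perm (Fin k) =>
      Fintype.piFinset fun i => F (s (α i)) (t (β (σ i))) with hS
  set f : ((_ : Equiv.Perm (Fin k)) × (Fin k → List V)) → R :=
    fun x => ((Equiv.Perm.sign x.1 : ℤ) : R) * ∏ i, ((x.2 i).map w).prod with hf
  have hdet : (Q.submatrix α β).det = ∑ x ∈ S, f x := by
    rw [← Matrix.det_transpose, Matrix.det_apply', hS, Finset.sum_sigma]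
    apply Finset.sum_congr rfl
    intro σ _
    simp only [Matrix.transpose_apply, Matrix.submatrix_apply]
    have h1 : ∏ i, Q (α i) (β (σ i)) =
        ∏ i, ∑ l ∈ F (s (α i)) (t (β (σ i))), (l.map w).prod :=
      Finset.prod_congr rfl fun i _ => hQ' (α i) (β (σ i))
    rw [h1, Finset.prod_univ_sum, Finset.mul_sum]
  have hpaths : ∀ x ∈ S, ∀ i, IsDirPath E (s (α i)) (t (β (x.1 i))) (x.2 i) := by
    intro x hx i
    rw [hS, Finset.mem_sigma, Fintype.mem_piFinset] at hx
    exact hFmem.1 (hx.2 i)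
  -- the non-disjoint part sums to zero
  have hB : ∑ x ∈ S.filter (fun x => ¬ Disj x.2), f x = 0 := by
    have nd : ∀ {x}, x ∈ S.filter (fun x => ¬ Disj x.2) → LGV.NDisj x.2 := by
      intro x hx
      exact LGV.ndisj_of_not _ (Finset.mem_filter.1 hx).2
    apply Finset.sum_involution
      (fun x hx =>
        ⟨x.1 * Equiv.swap (LGV.i0 x.2 (nd hx)) (LGV.j0 x.2 (nd hx)), LGV.newp x.2 (nd hx)⟩)
    · -- sums to zero
      intro x hx
      show ((Equiv.Perm.sign x.1 : ℤ) : R) * ∏ i, ((x.2 i).map w).prod +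
        ((Equiv.Perm.sign (x.1 * Equiv.swap (LGV.i0 x.2 (nd hx)) (LGV.j0 x.2 (nd hx))) : ℤ) : R) *
          ∏ i, ((LGV.newp x.2 (nd hx) i).map w).prod = 0
      rw [LGV.newp_prod w x.2 (nd hx), Equiv.Perm.sign_mul,
        Equiv.Perm.sign_swap (ne_of_lt (LGV.i0_lt_j0 x.2 (nd hx)))]
      push_cast
      ring
    · -- not a fixed point
      intro x hx _ heq
      have h1 := congrArg Sigma.fst heq
      dsimp only at h1
      have h2 : x.1 (Equiv.swap (LGV.i0 x.2 (nd hx)) (LGV.j0 x.2 (nd hx))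
          (LGV.i0 x.2 (nd hx))) = x.1 (LGV.i0 x.2 (nd hx)) := by
        rw [← Equiv.Perm.mul_apply, h1]
      rw [Equiv.swap_apply_left] at h2
      exact (ne_of_lt (LGV.i0_lt_j0 x.2 (nd hx))).symm (x.1.injective h2)
    · -- involutive
      intro x hx
      have hnd1 : LGV.NDisj x.2 := nd hx
      have hnd2 : LGV.NDisj (LGV.newp x.2 hnd1) := LGV.ndisj_newp _ _
      have hnodup_i0 : (x.2 (LGV.i0 x.2 hnd1)).Nodup :=
        hnodup (hpaths x (Finset.mem_filter.1 hx).1 _)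
      refine Sigma.ext ?_ ?_
      · show x.1 * Equiv.swap (LGV.i0 x.2 hnd1) (LGV.j0 x.2 hnd1) *
            Equiv.swap (LGV.i0 (LGV.newp x.2 hnd1) hnd2) (LGV.j0 (LGV.newp x.2 hnd1) hnd2)
            = x.1
        rw [LGV.i0_newp x.2 hnd1 hnd2, LGV.j0_newp x.2 hnd1 hnd2 hnodup_i0,
          mul_assoc, Equiv.swap_mul_self, mul_one]
      · show HEq (LGV.newp (LGV.newp x.2 hnd1) hnd2) x.2
        rw [heq_iff_eq]
        exact LGV.newp_newp x.2 hnd1 hnd2 hnodup_i0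
    · -- maps into the set
      intro x hx
      have hxS := (Finset.mem_filter.1 hx).1
      have hp := hpaths x hxS
      rw [Finset.mem_filter]
      constructor
      · rw [hS, Finset.mem_sigma]
        refine ⟨Finset.mem_univ _, ?_⟩
        rw [Fintype.mem_piFinset]
        intro i
        rw [hFmem]
        have hgraft := LGV.newp_isDirPath x.2 (nd hx)
          (hp (LGV.i0 x.2 (nd hx))) (hp (LGV.j0 x.2 (nd hx)))
        by_cases h1 : i = LGV.i0 x.2 (nd hx)
        · subst h1
          rw [Equiv.Perm.mul_apply, Equiv.swap_apply_left]
          exact hgraft.1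
        by_cases h2 : i = LGV.j0 x.2 (nd hx)
        · subst h2
          rw [Equiv.Perm.mul_apply, Equiv.swap_apply_right]
          exact hgraft.2
        · rw [Equiv.Perm.mul_apply, Equiv.swap_apply_of_ne_of_ne h1 h2]
          have hpi := hp i
          rw [← LGV.newp_apply_other x.2 (nd hx) h1 h2] at hpi
          exact hpi
      · show ¬ Disj (LGV.newp x.2 (nd hx))
        exact LGV.not_disj_of_ndisj _ (LGV.ndisj_newp _ _)
  -- the disjoint part equals the right-hand side
  have hD : {p : Fin k → List V |
      (∀ i, IsDirPath E (s (α i)) (t (β i)) (p i)) ∧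
      (∀ i j, i ≠ j → ∀ v, v ∈ p i → v ∉ p j)}.Finite := by
    apply Set.Finite.subset ((Fintype.piFinset fun i => F (s (α i)) (t (β i))).finite_toSet)
    intro p hp
    rw [Finset.mem_coe, Fintype.mem_piFinset]
    intro i
    exact hFmem.2 (hp.1 i)
  have hsigma1 : ∀ x ∈ S.filter (fun x => Disj x.2), x.1 = 1 := by
    intro x hx
    rw [Finset.mem_filter] at hx
    exact hplanar k α β hα hβ x.1 x.2 (hpaths x hx.1) hx.2
  have hA : ∑ x ∈ S.filter (fun x => Disj x.2), f x = ∑ p ∈ hD.toFinset,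
      ∏ i, ((p i).map w).prod := by
    apply Finset.sum_nbij' (fun x => x.2) (fun p => ⟨1, p⟩)
    · intro x hx
      have hσ := hsigma1 x hx
      have hp := hpaths x (Finset.mem_filter.1 hx).1
      rw [hσ] at hp
      simp only [Equiv.Perm.one_apply] at hp
      rw [Set.Finite.mem_toFinset]
      exact ⟨hp, (Finset.mem_filter.1 hx).2⟩
    · intro p hp
      rw [Set.Finite.mem_toFinset] at hp
      rw [Finset.mem_filter]
      constructor
      · rw [hS, Finset.mem_sigma]
        refine ⟨Finset.mem_univ _, ?_⟩
        rw [Fintype.mem_piFinset]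
        intro i
        rw [hFmem]
        simpa using hp.1 i
      · exact hp.2
    · intro x hx
      have hx1 : x = ⟨1, x.2⟩ := Sigma.ext (hsigma1 x hx) (HEq.refl _)
      exact hx1.symm
    · intro p _
      rfl
    · intro x hx
      show ((Equiv.Perm.sign x.1 : ℤ) : R) * ∏ i, ((x.2 i).map w).prod =
        ∏ i, ((x.2 i).map w).prod
      rw [hsigma1 x hx]
      simp
  have hRHS : ∑ᶠ p ∈ {p : Fin k → List V |
          (∀ i, IsDirPath E (s (α i)) (t (β i)) (p i)) ∧
          (∀ i j, i ≠ j → ∀ v, v ∈ p i → v ∉ p j)},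
        ∏ i, ((p i).map w).prod = ∑ p ∈ hD.toFinset, ∏ i, ((p i).map w).prod := by
    have h2 := finsum_mem_coe_finset
      (fun p : Fin k → List V => ∏ i, ((p i).map w).prod) hD.toFinset
    rw [hD.coe_toFinset] at h2
    exact h2
  rw [hdet, ← Finset.sum_filter_add_sum_filter_not S (fun x => Disj x.2) f, hA, hB, add_zero,
    hRHS]
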